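/- Let h < 0, R = √(h(h−1)), and let γ : [0,2π] → ℝ² be the counterclockwise parametrization γ(t) = (R cos t, h + R sin t) of the oval {H = h} (along which 2y − 1 ≠ 0). Then the line integrals of the five 1-forms ω₁,…,ω₅ along γ are: ∫_γ ω₁ = 2πh(h−1), ∫_γ ω₂ = 0, ∫_γ ω₃ = 2πh², ∫_γ ω₄ = 0, ∫_γ ω₅ = 0. Consequently, for any λ₁,…,λ₅ ∈ ℝ, ∫_γ (λ₁ω₁ + λ₂ω₂ + λ₃ω₃ + λ₄ω₄ + λ₅ω₅) = 2πh[h(λ₁ + λ₃) − λ₁]; up to normalization and orientation this is the first Melnikov function M₁(h) = −2πh[h(λ₁+λ₃) − λ₁] of the first period annulus. -/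

import Mathlib

open Real

set_option maxHeartbeats 1600000 in
/-- First Melnikov function of the first period annulus: for `h < 0`, along the
counterclockwise parametrization `γ(t) = (R cos t, h + R sin t)`,
`R = √(h(h−1))`, of the oval `{H = h}` (on which `2y − 1 ≠ 0`), the integrals
of `ω₁, …, ω₅` are `2πh(h−1), 0, 2πh², 0, 0`; hence
`∫ λ₁ω₁ + ⋯ + λ₅ω₅ = 2πh[h(λ₁+λ₃) − λ₁]`. -/
theorem first_melnikov_first_annulus (h : ℝ) (hh : h < 0) (l1 l2 l3 l4 l5 : ℝ) :
    let R := Real.sqrt (h * (h - 1))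
    let γ₁ : ℝ → ℝ := fun t => R * Real.cos t
    let γ₂ : ℝ → ℝ := fun t => h + R * Real.sin t
    let lineInt : (ℝ → ℝ → ℝ) → (ℝ → ℝ → ℝ) → ℝ := fun P Q =>
      ∫ t in (0 : ℝ)..(2 * π),
        (P (γ₁ t) (γ₂ t) * deriv γ₁ t + Q (γ₁ t) (γ₂ t) * deriv γ₂ t)
    (∀ t : ℝ, 2 * γ₂ t - 1 ≠ 0)
    -- ω₁ = (x dy − y dx)/(2y−1)²
    ∧ lineInt (fun _ y => -y / (2 * y - 1) ^ 2) (fun x y => x / (2 * y - 1) ^ 2)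
        = 2 * π * h * (h - 1)
    -- ω₂ = (x²+y²) dy/(2y−1)²
    ∧ lineInt (fun _ _ => 0) (fun x y => (x ^ 2 + y ^ 2) / (2 * y - 1) ^ 2) = 0
    -- ω₃ = −(x²+y²) dx/(2y−1)²
    ∧ lineInt (fun x y => -(x ^ 2 + y ^ 2) / (2 * y - 1) ^ 2) (fun _ _ => 0)
        = 2 * π * h ^ 2
    -- ω₄ = ((x²−y²) dy + 2xy dx)/(2y−1)²
    ∧ lineInt (fun x y => 2 * x * y / (2 * y - 1) ^ 2)
        (fun x y => (x ^ 2 - y ^ 2) / (2 * y - 1) ^ 2) = 0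
    -- ω₅ = (2xy dy − (x²−y²) dx)/(2y−1)²
    ∧ lineInt (fun x y => -(x ^ 2 - y ^ 2) / (2 * y - 1) ^ 2)
        (fun x y => 2 * x * y / (2 * y - 1) ^ 2) = 0
    -- the combination λ₁ω₁ + λ₂ω₂ + λ₃ω₃ + λ₄ω₄ + λ₅ω₅
    ∧ lineInt
        (fun x y => l1 * (-y / (2 * y - 1) ^ 2)
          + l3 * (-(x ^ 2 + y ^ 2) / (2 * y - 1) ^ 2)
          + l4 * (2 * x * y / (2 * y - 1) ^ 2)
          + l5 * (-(x ^ 2 - y ^ 2) / (2 * y - 1) ^ 2))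
        (fun x y => l1 * (x / (2 * y - 1) ^ 2)
          + l2 * ((x ^ 2 + y ^ 2) / (2 * y - 1) ^ 2)
          + l4 * ((x ^ 2 - y ^ 2) / (2 * y - 1) ^ 2)
          + l5 * (2 * x * y / (2 * y - 1) ^ 2))
      = 2 * π * h * (h * (l1 + l3) - l1) := by
  intro R γ₁ γ₂ lineInt
  have hpos : (0:ℝ) < h * (h - 1) := by nlinarith
  have hRr : R = Real.sqrt (h * (h - 1)) := rfl
  have hRpos : 0 < R := by rw [hRr]; exact Real.sqrt_pos.mpr hpos
  have hR2 : R ^ 2 = h ^ 2 - h := by rw [hRr, Real.sq_sqrt hpos.le]; ring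
  have hDneg : ∀ t : ℝ, 2 * (h + R * Real.sin t) - 1 < 0 := by
    intro t
    nlinarith [Real.sin_le_one t, Real.neg_one_le_sin t, hRpos, hR2,
      sq_nonneg (R + (2*h-1)/2)]
  have hDne : ∀ t : ℝ, 2 * (h + R * Real.sin t) - 1 ≠ 0 := fun t => ne_of_lt (hDneg t)
  have hDsqne : ∀ t : ℝ, (2 * (h + R * Real.sin t) - 1) ^ 2 ≠ 0 :=
    fun t => pow_ne_zero 2 (hDne t)
  have hs : ∀ t : ℝ, Real.sin t ^ 2 + Real.cos t ^ 2 = 1 := fun t => Real.sin_sq_add_cos_sq t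
  have hd1 : ∀ t, deriv γ₁ t = -(R * Real.sin t) := by
    intro t
    show deriv (fun t => R * Real.cos t) t = _
    rw [((Real.hasDerivAt_cos t).const_mul R).deriv]; ring
  have hd2 : ∀ t, deriv γ₂ t = R * Real.cos t := by
    intro t
    show deriv (fun t => h + R * Real.sin t) t = _
    rw [(((Real.hasDerivAt_sin t).const_mul R).const_add h).deriv]
  have hDder : ∀ t : ℝ, HasDerivAt (fun y => 2 * (h + R * Real.sin y) - 1)
      (2 * (R * Real.cos t)) t :=
    fun t => ((((Real.hasDerivAt_sin t).const_mul R).const_add h).const_mul 2).sub_const 1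
  -- antiderivative of 1/D
  have hA : ∀ t : ℝ, HasDerivAt
      (fun t => 2 * Real.arctan (2 * R * Real.cos t / (1 - (2 * (h + R * Real.sin t) - 1))) - t)
      (1 / (2 * (h + R * Real.sin t) - 1)) t := by
    intro t
    have hD := hDneg t
    have hv : (0:ℝ) < 1 - (2 * (h + R * Real.sin t) - 1) := by linarith
    have hvne := ne_of_gt hv
    have hu : HasDerivAt (fun t => 2 * R * Real.cos t) (2 * R * -Real.sin t) t :=
      (Real.hasDerivAt_cos t).const_mul (2*R)
    have hw : HasDerivAt (fun t : ℝ => 1 - (2 * (h + R * Real.sin t) - 1))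
        (-(2 * R * Real.cos t)) t := by
      have h2 := (hDder t).const_sub 1
      convert h2 using 1
      case e'_4 => rfl
      case e'_5 => rfl
      ring
    have hq := hu.div hw hvne
    have ha := (Real.hasDerivAt_arctan _).comp t hq
    have hfin := (ha.const_mul 2).sub (hasDerivAt_id t)
    convert hfin using 1
    case e'_4 => rfl
    case e'_5 => rfl
    case e'_8 => rfl
    have e1 : (1:ℝ) + (2 * R * Real.cos t / (1 - (2 * (h + R * Real.sin t) - 1))) ^ 2
        = ((4*h - 4) * (2 * (h + R * Real.sin t) - 1)) / (1 - (2 * (h + R * Real.sin t) - 1)) ^ 2 := by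
      field_simp
      linear_combination (4*R^2) * hs t + 4 * hR2
    have e3 : 2 * R * -Real.sin t * (1 - (2 * (h + R * Real.sin t) - 1))
          - 2 * R * Real.cos t * -(2 * R * Real.cos t)
        = (2*h - 2) * ((2 * (h + R * Real.sin t) - 1) + 1) := by
      linear_combination (4*R^2) * hs t + 4 * hR2
    rw [Function.comp_def] at *
    simp only [Pi.div_apply]
    rw [e1, e3]
    have h4 : (4*h - 4 : ℝ) ≠ 0 := by nlinarith
    have hDnet := hDne t
    have h1 : h - 1 ≠ 0 := by linarith
    field_simp
    ring
  -- antiderivative of 1/D^2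
  have hB : ∀ t : ℝ, HasDerivAt
      (fun y => (2*h - 1) * (2 * Real.arctan (2 * R * Real.cos y / (1 - (2 * (h + R * Real.sin y) - 1))) - y)
        + 2 * R * Real.cos y / (2 * (h + R * Real.sin y) - 1))
      (1 / (2 * (h + R * Real.sin t) - 1) ^ 2) t := by
    intro t
    have hdiv := ((Real.hasDerivAt_cos t).const_mul (2*R)).div (hDder t) (hDne t)
    convert ((hA t).const_mul (2*h - 1)).add hdiv using 1
    case e'_4 => rfl
    case e'_5 => rfl
    case e'_8 => rfl
    have e : 2 * R * -Real.sin t * (2 * (h + R * Real.sin t) - 1)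
          - 2 * R * Real.cos t * (2 * (R * Real.cos t))
        = -(2*h - 1) * (2 * (h + R * Real.sin t) - 1) + 1 := by
      linear_combination (-4*R^2) * hs t + (-4) * hR2
    rw [e]
    have hDnet := hDne t
    field_simp
    ring
  -- log antiderivative
  have hL : ∀ t : ℝ, HasDerivAt (fun y => Real.log (-(2 * (h + R * Real.sin y) - 1)))
      (-(2 * (R * Real.cos t)) / -(2 * (h + R * Real.sin t) - 1)) t := by
    intro t
    exact ((hDder t).neg).log (neg_ne_zero.mpr (hDne t))
  have e2 : ∀ t : ℝ, (R * Real.cos t) ^ 2 + (h + R * Real.sin t) ^ 2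
      = h * (2 * (h + R * Real.sin t) - 1) := by
    intro t; linear_combination R ^ 2 * hs t + hR2
  -- the five HasDerivAt facts with literal integrands
  have hF1 : ∀ t : ℝ, HasDerivAt
      (fun y => h / 2 * ((2 * Real.arctan (2 * R * Real.cos y / (1 - (2 * (h + R * Real.sin y) - 1))) - y)
        - ((2 * h - 1) * (2 * Real.arctan (2 * R * Real.cos y / (1 - (2 * (h + R * Real.sin y) - 1))) - y)
          + 2 * R * Real.cos y / (2 * (h + R * Real.sin y) - 1))))
      (-(h + R * Real.sin t) / (2 * (h + R * Real.sin t) - 1) ^ 2 * -(R * Real.sin t) +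
        R * Real.cos t / (2 * (h + R * Real.sin t) - 1) ^ 2 * (R * Real.cos t)) t := by
    intro t
    convert ((hA t).sub (hB t)).const_mul (h / 2) using 1
    case e'_4 => rfl
    case e'_5 => rfl
    case e'_8 => rfl
    have e : (h + R * Real.sin t) * (R * Real.sin t) + R * Real.cos t * (R * Real.cos t)
        = h / 2 * (2 * (h + R * Real.sin t) - 1) - h / 2 := by
      linear_combination R ^ 2 * hs t + hR2
    have hDnet := hDne t
    calc -(h + R * Real.sin t) / (2 * (h + R * Real.sin t) - 1) ^ 2 * -(R * Real.sin t) +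
        R * Real.cos t / (2 * (h + R * Real.sin t) - 1) ^ 2 * (R * Real.cos t)
        = ((h + R * Real.sin t) * (R * Real.sin t) + R * Real.cos t * (R * Real.cos t))
            / (2 * (h + R * Real.sin t) - 1) ^ 2 := by ring
      _ = (h / 2 * (2 * (h + R * Real.sin t) - 1) - h / 2) / (2 * (h + R * Real.sin t) - 1) ^ 2 := by
          rw [e]
      _ = h / 2 * (1 / (2 * (h + R * Real.sin t) - 1) - 1 / (2 * (h + R * Real.sin t) - 1) ^ 2) := by
          field_simp
  have hF2 : ∀ t : ℝ, HasDerivAt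
      (fun y => h / 2 * Real.log (-(2 * (h + R * Real.sin y) - 1)))
      (0 * -(R * Real.sin t) +
        ((R * Real.cos t) ^ 2 + (h + R * Real.sin t) ^ 2) / (2 * (h + R * Real.sin t) - 1) ^ 2
          * (R * Real.cos t)) t := by
    intro t
    convert (hL t).const_mul (h / 2) using 1
    case e'_4 => rfl
    case e'_5 => rfl
    have hDnet := hDne t
    calc 0 * -(R * Real.sin t) +
        ((R * Real.cos t) ^ 2 + (h + R * Real.sin t) ^ 2) / (2 * (h + R * Real.sin t) - 1) ^ 2
          * (R * Real.cos t)
        = ((R * Real.cos t) ^ 2 + (h + R * Real.sin t) ^ 2) * (R * Real.cos t)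
            / (2 * (h + R * Real.sin t) - 1) ^ 2 := by ring
      _ = h * (2 * (h + R * Real.sin t) - 1) * (R * Real.cos t)
            / (2 * (h + R * Real.sin t) - 1) ^ 2 := by rw [e2 t]
      _ = h / 2 * (-(2 * (R * Real.cos t)) / -(2 * (h + R * Real.sin t) - 1)) := by
          rw [neg_div_neg_eq]; field_simp
  have hF3 : ∀ t : ℝ, HasDerivAt
      (fun y => h / 2 * y - h * (2 * h - 1) / 2 *
        (2 * Real.arctan (2 * R * Real.cos y / (1 - (2 * (h + R * Real.sin y) - 1))) - y))
      (-((R * Real.cos t) ^ 2 + (h + R * Real.sin t) ^ 2) / (2 * (h + R * Real.sin t) - 1) ^ 2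
          * -(R * Real.sin t) + 0 * (R * Real.cos t)) t := by
    intro t
    convert ((hasDerivAt_id t).const_mul (h / 2)).sub ((hA t).const_mul (h * (2 * h - 1) / 2)) using 1
    case e'_4 => rfl
    case e'_5 => rfl
    case e'_8 => rfl
    have hDnet := hDne t
    calc -((R * Real.cos t) ^ 2 + (h + R * Real.sin t) ^ 2) / (2 * (h + R * Real.sin t) - 1) ^ 2
          * -(R * Real.sin t) + 0 * (R * Real.cos t)
        = ((R * Real.cos t) ^ 2 + (h + R * Real.sin t) ^ 2) * (R * Real.sin t)
            / (2 * (h + R * Real.sin t) - 1) ^ 2 := by ring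
      _ = h * (2 * (h + R * Real.sin t) - 1) * (R * Real.sin t)
            / (2 * (h + R * Real.sin t) - 1) ^ 2 := by rw [e2 t]
      _ = h / 2 * 1 - h * (2 * h - 1) / 2 * (1 / (2 * (h + R * Real.sin t) - 1)) := by
          field_simp; ring
  have hF4 : ∀ t : ℝ, HasDerivAt
      (fun y => ((h - 1) / 2 * (-1 / (2 * (h + R * Real.sin y) - 1))
        + (h - 1) * Real.log (-(2 * (h + R * Real.sin y) - 1))) - R * Real.sin y)
      (2 * (R * Real.cos t) * (h + R * Real.sin t) / (2 * (h + R * Real.sin t) - 1) ^ 2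
          * -(R * Real.sin t) +
        ((R * Real.cos t) ^ 2 - (h + R * Real.sin t) ^ 2) / (2 * (h + R * Real.sin t) - 1) ^ 2
          * (R * Real.cos t)) t := by
    intro t
    have hcd := (hasDerivAt_const t (-1 : ℝ)).div (hDder t) (hDne t)
    convert ((hcd.const_mul ((h - 1) / 2)).add ((hL t).const_mul (h - 1))).sub
      ((Real.hasDerivAt_sin t).const_mul R) using 1
    case e'_4 => rfl
    case e'_5 => rfl
    case e'_8 => rfl
    have e4 : (R * Real.cos t) * (-2 * (R * Real.sin t) * (h + R * Real.sin t)
          + ((R * Real.cos t) ^ 2 - (h + R * Real.sin t) ^ 2))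
        = R * Real.cos t * ((h - 1) + 2 * (h - 1) * (2 * (h + R * Real.sin t) - 1)
            - (2 * (h + R * Real.sin t) - 1) ^ 2) := by
      linear_combination (R * Real.cos t * R ^ 2) * hs t + (R * Real.cos t) * hR2
    have hDnet := hDne t
    calc 2 * (R * Real.cos t) * (h + R * Real.sin t) / (2 * (h + R * Real.sin t) - 1) ^ 2
          * -(R * Real.sin t) +
        ((R * Real.cos t) ^ 2 - (h + R * Real.sin t) ^ 2) / (2 * (h + R * Real.sin t) - 1) ^ 2
          * (R * Real.cos t)
        = ((R * Real.cos t) * (-2 * (R * Real.sin t) * (h + R * Real.sin t)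
            + ((R * Real.cos t) ^ 2 - (h + R * Real.sin t) ^ 2)))
            / (2 * (h + R * Real.sin t) - 1) ^ 2 := by ring
      _ = (R * Real.cos t * ((h - 1) + 2 * (h - 1) * (2 * (h + R * Real.sin t) - 1)
            - (2 * (h + R * Real.sin t) - 1) ^ 2)) / (2 * (h + R * Real.sin t) - 1) ^ 2 := by
          rw [e4]
      _ = ((h - 1) / 2 * ((0 * (2 * (h + R * Real.sin t) - 1) - -1 * (2 * (R * Real.cos t)))
              / (2 * (h + R * Real.sin t) - 1) ^ 2)
            + (h - 1) * (-(2 * (R * Real.cos t)) / -(2 * (h + R * Real.sin t) - 1)))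
            - R * Real.cos t := by
          rw [neg_div_neg_eq]; field_simp; ring
  have hF5 : ∀ t : ℝ, HasDerivAt
      (fun y => R * Real.cos y + (h - 1) * y
        + (-(3 : ℝ) / 2 + 5 / 2 * h - h ^ 2) *
            (2 * Real.arctan (2 * R * Real.cos y / (1 - (2 * (h + R * Real.sin y) - 1))) - y)
        + (h - 1) / 2 *
            ((2 * h - 1) * (2 * Real.arctan (2 * R * Real.cos y / (1 - (2 * (h + R * Real.sin y) - 1))) - y)
              + 2 * R * Real.cos y / (2 * (h + R * Real.sin y) - 1)))
      (-((R * Real.cos t) ^ 2 - (h + R * Real.sin t) ^ 2) / (2 * (h + R * Real.sin t) - 1) ^ 2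
          * -(R * Real.sin t) +
        2 * (R * Real.cos t) * (h + R * Real.sin t) / (2 * (h + R * Real.sin t) - 1) ^ 2
          * (R * Real.cos t)) t := by
    intro t
    convert ((((Real.hasDerivAt_cos t).const_mul R).add ((hasDerivAt_id t).const_mul (h - 1))).add
        ((hA t).const_mul (-(3 : ℝ) / 2 + 5 / 2 * h - h ^ 2))).add
        ((hB t).const_mul ((h - 1) / 2)) using 1
    case e'_4 => rfl
    case e'_5 => rfl
    case e'_8 => rfl
    have e5 : ((R * Real.cos t) ^ 2 - (h + R * Real.sin t) ^ 2) * (R * Real.sin t)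
          + 2 * (R * Real.cos t) * (h + R * Real.sin t) * (R * Real.cos t)
        = (-(R * Real.sin t) + (h - 1)) * (2 * (h + R * Real.sin t) - 1) ^ 2
          + (-(3 : ℝ) / 2 + 5 / 2 * h - h ^ 2) * (2 * (h + R * Real.sin t) - 1)
          + (h - 1) / 2 := by
      linear_combination (2 * R ^ 2 * h + 3 * Real.sin t * R ^ 3) * hs t
        + (2 * h + 3 * Real.sin t * R) * hR2
    have hDnet := hDne t
    calc -((R * Real.cos t) ^ 2 - (h + R * Real.sin t) ^ 2) / (2 * (h + R * Real.sin t) - 1) ^ 2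
          * -(R * Real.sin t) +
        2 * (R * Real.cos t) * (h + R * Real.sin t) / (2 * (h + R * Real.sin t) - 1) ^ 2
          * (R * Real.cos t)
        = (((R * Real.cos t) ^ 2 - (h + R * Real.sin t) ^ 2) * (R * Real.sin t)
            + 2 * (R * Real.cos t) * (h + R * Real.sin t) * (R * Real.cos t))
            / (2 * (h + R * Real.sin t) - 1) ^ 2 := by ring
      _ = ((-(R * Real.sin t) + (h - 1)) * (2 * (h + R * Real.sin t) - 1) ^ 2
            + (-(3 : ℝ) / 2 + 5 / 2 * h - h ^ 2) * (2 * (h + R * Real.sin t) - 1)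
            + (h - 1) / 2) / (2 * (h + R * Real.sin t) - 1) ^ 2 := by rw [e5]
      _ = R * -Real.sin t + (h - 1) * 1
            + (-(3 : ℝ) / 2 + 5 / 2 * h - h ^ 2) * (1 / (2 * (h + R * Real.sin t) - 1))
            + (h - 1) / 2 * (1 / (2 * (h + R * Real.sin t) - 1) ^ 2) := by
          field_simp
  -- combined
  have hFc : ∀ t : ℝ, HasDerivAt
      (fun y => l1 * (h / 2 * ((2 * Real.arctan (2 * R * Real.cos y / (1 - (2 * (h + R * Real.sin y) - 1))) - y)
          - ((2 * h - 1) * (2 * Real.arctan (2 * R * Real.cos y / (1 - (2 * (h + R * Real.sin y) - 1))) - y)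
            + 2 * R * Real.cos y / (2 * (h + R * Real.sin y) - 1))))
        + l2 * (h / 2 * Real.log (-(2 * (h + R * Real.sin y) - 1)))
        + l3 * (h / 2 * y - h * (2 * h - 1) / 2 *
            (2 * Real.arctan (2 * R * Real.cos y / (1 - (2 * (h + R * Real.sin y) - 1))) - y))
        + l4 * (((h - 1) / 2 * (-1 / (2 * (h + R * Real.sin y) - 1))
            + (h - 1) * Real.log (-(2 * (h + R * Real.sin y) - 1))) - R * Real.sin y)
        + l5 * (R * Real.cos y + (h - 1) * y
            + (-(3 : ℝ) / 2 + 5 / 2 * h - h ^ 2) *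
                (2 * Real.arctan (2 * R * Real.cos y / (1 - (2 * (h + R * Real.sin y) - 1))) - y)
            + (h - 1) / 2 *
                ((2 * h - 1) * (2 * Real.arctan (2 * R * Real.cos y / (1 - (2 * (h + R * Real.sin y) - 1))) - y)
                  + 2 * R * Real.cos y / (2 * (h + R * Real.sin y) - 1))))
      ((l1 * (-(h + R * Real.sin t) / (2 * (h + R * Real.sin t) - 1) ^ 2) +
          l3 * (-((R * Real.cos t) ^ 2 + (h + R * Real.sin t) ^ 2) / (2 * (h + R * Real.sin t) - 1) ^ 2) +
          l4 * (2 * (R * Real.cos t) * (h + R * Real.sin t) / (2 * (h + R * Real.sin t) - 1) ^ 2) +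
          l5 * (-((R * Real.cos t) ^ 2 - (h + R * Real.sin t) ^ 2) / (2 * (h + R * Real.sin t) - 1) ^ 2)) *
        -(R * Real.sin t) +
        (l1 * (R * Real.cos t / (2 * (h + R * Real.sin t) - 1) ^ 2) +
          l2 * (((R * Real.cos t) ^ 2 + (h + R * Real.sin t) ^ 2) / (2 * (h + R * Real.sin t) - 1) ^ 2) +
          l4 * (((R * Real.cos t) ^ 2 - (h + R * Real.sin t) ^ 2) / (2 * (h + R * Real.sin t) - 1) ^ 2) +
          l5 * (2 * (R * Real.cos t) * (h + R * Real.sin t) / (2 * (h + R * Real.sin t) - 1) ^ 2)) *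
        (R * Real.cos t)) t := by
    intro t
    convert (((((hF1 t).const_mul l1).add ((hF2 t).const_mul l2)).add ((hF3 t).const_mul l3)).add
        ((hF4 t).const_mul l4)).add ((hF5 t).const_mul l5) using 1
    case e'_4 => rfl
    case e'_5 => rfl
    case e'_8 => rfl
    ring
  refine ⟨fun t => hDne t, ?_, ?_, ?_, ?_, ?_, ?_⟩
  · simp only [lineInt, γ₁, γ₂, hd1, hd2]
    rw [intervalIntegral.integral_eq_sub_of_hasDerivAt (fun t _ => hF1 t)
      (by apply Continuous.intervalIntegrable; fun_prop (disch := exact fun _ => hDsqne _))]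
    simp only [Real.cos_two_pi, Real.sin_two_pi, Real.cos_zero, Real.sin_zero, mul_zero, mul_one,
      add_zero, zero_add, sub_zero, zero_sub, neg_zero]
    ring
  · simp only [lineInt, γ₁, γ₂, hd1, hd2]
    rw [intervalIntegral.integral_eq_sub_of_hasDerivAt (fun t _ => hF2 t)
      (by apply Continuous.intervalIntegrable; fun_prop (disch := exact fun _ => hDsqne _))]
    simp only [Real.cos_two_pi, Real.sin_two_pi, Real.cos_zero, Real.sin_zero, mul_zero, mul_one,
      add_zero, zero_add, sub_zero, zero_sub, neg_zero]
    ring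
  · simp only [lineInt, γ₁, γ₂, hd1, hd2]
    rw [intervalIntegral.integral_eq_sub_of_hasDerivAt (fun t _ => hF3 t)
      (by apply Continuous.intervalIntegrable; fun_prop (disch := exact fun _ => hDsqne _))]
    simp only [Real.cos_two_pi, Real.sin_two_pi, Real.cos_zero, Real.sin_zero, mul_zero, mul_one,
      add_zero, zero_add, sub_zero, zero_sub, neg_zero]
    ring
  · simp only [lineInt, γ₁, γ₂, hd1, hd2]
    rw [intervalIntegral.integral_eq_sub_of_hasDerivAt (fun t _ => hF4 t)
      (by apply Continuous.intervalIntegrable; fun_prop (disch := exact fun _ => hDsqne _))]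
    simp only [Real.cos_two_pi, Real.sin_two_pi, Real.cos_zero, Real.sin_zero, mul_zero, mul_one,
      add_zero, zero_add, sub_zero, zero_sub, neg_zero]
    ring
  · simp only [lineInt, γ₁, γ₂, hd1, hd2]
    rw [intervalIntegral.integral_eq_sub_of_hasDerivAt (fun t _ => hF5 t)
      (by apply Continuous.intervalIntegrable; fun_prop (disch := exact fun _ => hDsqne _))]
    simp only [Real.cos_two_pi, Real.sin_two_pi, Real.cos_zero, Real.sin_zero, mul_zero, mul_one,
      add_zero, zero_add, sub_zero, zero_sub, neg_zero]
    ring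
  · simp only [lineInt, γ₁, γ₂, hd1, hd2]
    rw [intervalIntegral.integral_eq_sub_of_hasDerivAt (fun t _ => hFc t)
      (by apply Continuous.intervalIntegrable; fun_prop (disch := exact fun _ => hDsqne _))]
    simp only [Real.cos_two_pi, Real.sin_two_pi, Real.cos_zero, Real.sin_zero, mul_zero, mul_one,
      add_zero, zero_add, sub_zero, zero_sub, neg_zero]
    ring
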